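/- Let μ be a finite Borel measure on a compact Hausdorff space Ω and 0 < p, q < ∞. If p ≤ q, then the Lorentz quasinorm L_{p,q}(μ) satisfies an upper p-estimate and a lower q-estimate: for disjointly supported Borel functions f_1, …, f_n, ‖f_1 + ⋯ + f_n‖_{L_{p,q}} ≤ (Σ_i ‖f_i‖_{L_{p,q}}^p)^{1/p} and ‖f_1 + ⋯ + f_n‖_{L_{p,q}} ≥ (Σ_i ‖f_i‖_{L_{p,q}}^q)^{1/q}. If p > q, then L_{p,q}(μ) satisfies an upper q-estimate and a lower p-estimate: for disjointly supported f_1, …, f_n, ‖f_1 + ⋯ + f_n‖_{L_{p,q}} ≤ (Σ_i ‖f_i‖_{L_{p,q}}^q)^{1/q} and ‖f_1 + ⋯ + f_n‖_{L_{p,q}} ≥ (Σ_i ‖f_i‖_{L_{p,q}}^p)^{1/p}. -/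

import Mathlib

open Set Filter Topology MeasureTheory ENNReal

/-- The Lorentz quasinorm `‖f‖_{L_{p,q}(μ)} = (∫₀^∞ q t^{q-1} μ(|f| > t)^{q/p} dt)^{1/q}`. -/
noncomputable def LorentzNorm {Ω : Type*} [MeasurableSpace Ω]
    (μ : Measure Ω) (p q : ℝ) (f : Ω → ℝ) : ℝ≥0∞ :=
  (∫⁻ t in Ioi (0 : ℝ),
      ENNReal.ofReal (q * t ^ (q - 1)) * μ {x | t < |f x|} ^ (q / p)) ^ (1 / q)

/-- `f₁, …, fₙ` are disjointly supported. -/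
def DisjSupp {Ω : Type*} {n : ℕ} (f : Fin n → Ω → ℝ) : Prop :=
  ∀ i j, i ≠ j → ∀ x, f i x = 0 ∨ f j x = 0

-- pointwise n-ary, r ≥ 1
theorem aux_sum_rpow_le {ι : Type*} (s : Finset ι) (a : ι → ℝ≥0∞) {r : ℝ} (hr : 1 ≤ r) :
    ∑ i ∈ s, a i ^ r ≤ (∑ i ∈ s, a i) ^ r := by
  induction s using Finset.cons_induction with
  | empty => simp [ENNReal.zero_rpow_of_pos (lt_of_lt_of_le one_pos hr)]
  | cons i s hi ih =>
      rw [Finset.sum_cons, Finset.sum_cons]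
      exact le_trans (add_le_add_right ih _) (ENNReal.add_rpow_le_rpow_add _ _ hr)

-- pointwise n-ary, 0 < r ≤ 1
theorem aux_rpow_sum_le {ι : Type*} (s : Finset ι) (a : ι → ℝ≥0∞) {r : ℝ}
    (hr0 : 0 < r) (hr1 : r ≤ 1) :
    (∑ i ∈ s, a i) ^ r ≤ ∑ i ∈ s, a i ^ r := by
  induction s using Finset.cons_induction with
  | empty => simp [ENNReal.zero_rpow_of_pos hr0]
  | cons i s hi ih =>
      rw [Finset.sum_cons, Finset.sum_cons]
      exact le_trans (ENNReal.rpow_add_le_add_rpow _ _ hr0.le hr1) (add_le_add_right ih _)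

-- n-ary Minkowski, r ≥ 1
theorem aux_mink {α : Type*} [MeasurableSpace α] (ν : Measure α) {ι : Type*} (s : Finset ι)
    (F : ι → α → ℝ≥0∞) (hF : ∀ i, Measurable (F i)) {r : ℝ} (hr : 1 ≤ r) :
    (∫⁻ x, (∑ i ∈ s, F i x) ^ r ∂ν) ^ (1 / r) ≤
      ∑ i ∈ s, (∫⁻ x, F i x ^ r ∂ν) ^ (1 / r) := by
  induction s using Finset.cons_induction with
  | empty =>
      have hr0 : (0:ℝ) < r := lt_of_lt_of_le one_pos hr
      simp only [Finset.sum_empty, ENNReal.zero_rpow_of_pos hr0,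
        ENNReal.zero_rpow_of_pos (by positivity : (0:ℝ) < 1/r), lintegral_zero]
      exact le_refl 0
  | cons i s hi ih =>
      simp only [Finset.sum_cons]
      calc (∫⁻ x, (F i x + ∑ j ∈ s, F j x) ^ r ∂ν) ^ (1 / r)
          ≤ (∫⁻ x, F i x ^ r ∂ν) ^ (1 / r) + (∫⁻ x, (∑ j ∈ s, F j x) ^ r ∂ν) ^ (1 / r) :=
            ENNReal.lintegral_Lp_add_le (hF i).aemeasurable
              (Finset.measurable_sum s fun j _ => hF j).aemeasurable hr
        _ ≤ _ := add_le_add_right ih _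

-- concavity, two-term
theorem aux_concave2 {w₁ w₂ u v : ℝ≥0∞} (hw : w₁ + w₂ = 1) {r : ℝ}
    (hr0 : 0 < r) (hr1 : r ≤ 1) :
    w₁ * u ^ r + w₂ * v ^ r ≤ (w₁ * u + w₂ * v) ^ r := by
  have h1r : 1 ≤ 1 / r := by exact one_le_one_div hr0 hr1
  have h := ENNReal.rpow_arith_mean_le_arith_mean2_rpow w₁ w₂ (u ^ r) (v ^ r) hw h1r
  rw [← ENNReal.rpow_mul, ← ENNReal.rpow_mul, mul_one_div_cancel hr0.ne', ENNReal.rpow_one,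
    ENNReal.rpow_one] at h
  calc w₁ * u ^ r + w₂ * v ^ r
      = ((w₁ * u ^ r + w₂ * v ^ r) ^ (1 / r)) ^ r := by
        rw [← ENNReal.rpow_mul, one_div, inv_mul_cancel₀ hr0.ne', ENNReal.rpow_one]
    _ ≤ (w₁ * u + w₂ * v) ^ r := ENNReal.rpow_le_rpow h hr0.le

-- two-term reverse Minkowski, 0 < r ≤ 1
theorem aux_rev2 {α : Type*} [MeasurableSpace α] (ν : Measure α) {f g : α → ℝ≥0∞}
    (hf : Measurable f) (hg : Measurable g) {r : ℝ} (hr0 : 0 < r) (hr1 : r ≤ 1) :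
    (∫⁻ x, f x ^ r ∂ν) ^ (1 / r) + (∫⁻ x, g x ^ r ∂ν) ^ (1 / r) ≤
      (∫⁻ x, (f x + g x) ^ r ∂ν) ^ (1 / r) := by
  set A := ∫⁻ x, f x ^ r ∂ν with hA
  set B := ∫⁻ x, g x ^ r ∂ν with hB
  set C := ∫⁻ x, (f x + g x) ^ r ∂ν with hC
  have h1r : (0:ℝ) < 1 / r := by positivity
  have hAC : A ≤ C := lintegral_mono fun x => ENNReal.rpow_le_rpow le_self_add hr0.le
  have hBC : B ≤ C := lintegral_mono fun x => ENNReal.rpow_le_rpow le_add_self hr0.le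
  rcases eq_or_ne A 0 with hA0 | hA0
  · rw [hA0, ENNReal.zero_rpow_of_pos h1r, zero_add]
    exact ENNReal.rpow_le_rpow hBC h1r.le
  rcases eq_or_ne B 0 with hB0 | hB0
  · rw [hB0, ENNReal.zero_rpow_of_pos h1r, add_zero]
    exact ENNReal.rpow_le_rpow hAC h1r.le
  rcases eq_or_ne A ⊤ with hAt | hAt
  · have : C = ⊤ := top_le_iff.mp (hAt ▸ hAC)
    rw [this, ENNReal.top_rpow_of_pos h1r]; exact le_top
  rcases eq_or_ne B ⊤ with hBt | hBt
  · have : C = ⊤ := top_le_iff.mp (hBt ▸ hBC)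
    rw [this, ENNReal.top_rpow_of_pos h1r]; exact le_top
  -- main case
  set F := A ^ (1 / r) with hF
  set G := B ^ (1 / r) with hG
  have hF0 : F ≠ 0 := by simp [hF, ENNReal.rpow_eq_zero_iff, hA0, hAt, h1r, h1r.le, not_lt.mpr h1r.le]
  have hFt : F ≠ ⊤ := by simp [hF, ENNReal.rpow_eq_top_iff, hA0, hAt, h1r, not_lt.mpr h1r.le]
  have hG0 : G ≠ 0 := by simp [hG, ENNReal.rpow_eq_zero_iff, hB0, hBt, h1r, not_lt.mpr h1r.le]
  have hGt : G ≠ ⊤ := by simp [hG, ENNReal.rpow_eq_top_iff, hB0, hBt, h1r, not_lt.mpr h1r.le]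
  set T := F + G with hT
  have hT0 : T ≠ 0 := by simp [hT, hF0]
  have hTt : T ≠ ⊤ := by simp [hT, ENNReal.add_ne_top, hFt, hGt]
  have hw : F / T + G / T = 1 := by
    rw [ENNReal.div_add_div_same, ENNReal.div_self hT0 hTt]
  have hFr : F ^ r = A := by
    rw [hF, ← ENNReal.rpow_mul, one_div, inv_mul_cancel₀ hr0.ne', ENNReal.rpow_one]
  have hGr : G ^ r = B := by
    rw [hG, ← ENNReal.rpow_mul, one_div, inv_mul_cancel₀ hr0.ne', ENNReal.rpow_one]
  have hcancel : ∀ (a c b : ℝ≥0∞), a ≠ 0 → a ≠ ⊤ → a / c * (b / a) = b / c := by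
    intro a c b ha hat
    calc a / c * (b / a) = a * a⁻¹ * (b * c⁻¹) := by
          simp only [div_eq_mul_inv]; ring
      _ = b / c := by rw [ENNReal.mul_inv_cancel ha hat, one_mul, div_eq_mul_inv]
  have hpt : ∀ x, T ^ r * (F / T * (f x / F) ^ r + G / T * (g x / G) ^ r) ≤ (f x + g x) ^ r := by
    intro x
    have h := aux_concave2 hw hr0 hr1 (u := f x / F) (v := g x / G)
    have heq : F / T * (f x / F) + G / T * (g x / G) = (f x + g x) / T := by
      rw [hcancel F T (f x) hF0 hFt, hcancel G T (g x) hG0 hGt, ENNReal.div_add_div_same]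
    rw [heq] at h
    calc T ^ r * (F / T * (f x / F) ^ r + G / T * (g x / G) ^ r)
        ≤ T ^ r * (((f x + g x) / T) ^ r) := mul_le_mul_right h _
      _ = (f x + g x) ^ r := by
          rw [ENNReal.div_rpow_of_nonneg _ _ hr0.le,
            ENNReal.mul_div_cancel (by simp [ENNReal.rpow_eq_zero_iff, hT0, hTt, not_lt.mpr hr0.le] : T ^ r ≠ 0)
              (by simp [ENNReal.rpow_eq_top_iff, hT0, hTt, not_lt.mpr hr0.le] : T ^ r ≠ ⊤)]
  have hint : T ^ r ≤ C := by
    have hmeasf : Measurable fun x => F / T * (f x / F) ^ r :=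
      (((hf.div_const F).pow_const r)).const_mul _
    have hmeasg : Measurable fun x => G / T * (g x / G) ^ r :=
      (((hg.div_const G).pow_const r)).const_mul _
    have hTr : T ^ r ≠ ⊤ := by simp [ENNReal.rpow_eq_top_iff, hT0, hTt, not_lt.mpr hr0.le]
    calc T ^ r = T ^ r * (F / T * 1 + G / T * 1) := by rw [mul_one, mul_one, hw, mul_one]
      _ = ∫⁻ x, T ^ r * (F / T * (f x / F) ^ r + G / T * (g x / G) ^ r) ∂ν := by
          rw [lintegral_const_mul' _ _ hTr, lintegral_add_left hmeasf,
            lintegral_const_mul' _ _ (by simp [ENNReal.div_eq_top, hFt, hT0] : F / T ≠ ⊤),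
            lintegral_const_mul' _ _ (by simp [ENNReal.div_eq_top, hGt, hT0] : G / T ≠ ⊤)]
          congr 2
          · have : ∫⁻ x, (f x / F) ^ r ∂ν = 1 := by
              have h1 : ∀ x : α, (f x / F) ^ r = f x ^ r * (F ^ r)⁻¹ := fun x => by
                rw [ENNReal.div_rpow_of_nonneg _ _ hr0.le, div_eq_mul_inv]
              simp only [h1]
              rw [lintegral_mul_const' _ _
                  (by rw [Ne, ENNReal.inv_eq_top, hFr]; exact hA0), hFr, ← hA,
                ENNReal.mul_inv_cancel hA0 hAt]
            rw [this, mul_one]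
          · have : ∫⁻ x, (g x / G) ^ r ∂ν = 1 := by
              have h1 : ∀ x : α, (g x / G) ^ r = g x ^ r * (G ^ r)⁻¹ := fun x => by
                rw [ENNReal.div_rpow_of_nonneg _ _ hr0.le, div_eq_mul_inv]
              simp only [h1]
              rw [lintegral_mul_const' _ _
                  (by rw [Ne, ENNReal.inv_eq_top, hGr]; exact hB0), hGr, ← hB,
                ENNReal.mul_inv_cancel hB0 hBt]
            rw [this, mul_one]
      _ ≤ C := lintegral_mono hpt
  calc F + G = (T ^ r) ^ (1 / r) := by
        rw [← ENNReal.rpow_mul, mul_one_div_cancel hr0.ne', ENNReal.rpow_one]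
    _ ≤ C ^ (1 / r) := ENNReal.rpow_le_rpow hint h1r.le

-- n-ary reverse Minkowski
theorem aux_rev_mink {α : Type*} [MeasurableSpace α] (ν : Measure α) {ι : Type*} (s : Finset ι)
    (F : ι → α → ℝ≥0∞) (hF : ∀ i, Measurable (F i)) {r : ℝ} (hr0 : 0 < r) (hr1 : r ≤ 1) :
    ∑ i ∈ s, (∫⁻ x, F i x ^ r ∂ν) ^ (1 / r) ≤
      (∫⁻ x, (∑ i ∈ s, F i x) ^ r ∂ν) ^ (1 / r) := by
  induction s using Finset.cons_induction with
  | empty => simp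
  | cons i s hi ih =>
      simp only [Finset.sum_cons]
      calc (∫⁻ x, F i x ^ r ∂ν) ^ (1 / r) + ∑ j ∈ s, (∫⁻ x, F j x ^ r ∂ν) ^ (1 / r)
          ≤ (∫⁻ x, F i x ^ r ∂ν) ^ (1 / r) + (∫⁻ x, (∑ j ∈ s, F j x) ^ r ∂ν) ^ (1 / r) :=
            add_le_add_right ih _
        _ ≤ _ := aux_rev2 ν (hF i) (Finset.measurable_sum s fun j _ => hF j) hr0 hr1

theorem aux_distrib {Ω : Type*} [MeasurableSpace Ω] (μ : Measure Ω) {n : ℕ}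
    (f : Fin n → Ω → ℝ) (hm : ∀ i, Measurable (f i)) (hd : DisjSupp f)
    {t : ℝ} (ht : 0 < t) :
    μ {x | t < |∑ i, f i x|} = ∑ i, μ {x | t < |f i x|} := by
  have key : ∀ (x : Ω) (i : Fin n), f i x ≠ 0 → ∑ j, f j x = f i x := by
    intro x i hi
    refine Finset.sum_eq_single_of_mem i (Finset.mem_univ i) fun j _ hj => ?_
    rcases hd j i hj x with h | h
    · exact h
    · exact absurd h hi
  have hset : {x | t < |∑ i, f i x|} = ⋃ i, {x | t < |f i x|} := by
    ext x
    simp only [mem_setOf_eq, mem_iUnion]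
    constructor
    · intro h
      by_cases hall : ∀ i, f i x = 0
      · have : (∑ i, f i x) = 0 := Finset.sum_eq_zero fun i _ => hall i
        rw [this, abs_zero] at h
        exact absurd h (not_lt.mpr ht.le)
      · push_neg at hall
        obtain ⟨i, hi⟩ := hall
        exact ⟨i, by rwa [← key x i hi]⟩
    · rintro ⟨i, hi⟩
      have hne : f i x ≠ 0 := by
        intro h0
        rw [h0, abs_zero] at hi
        exact absurd hi (not_lt.mpr ht.le)
      rwa [key x i hne]
  have hdisj : Pairwise (Function.onFun Disjoint fun i => {x | t < |f i x|}) := by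
    intro i j hij
    rw [Function.onFun, Set.disjoint_left]
    intro x hxi hxj
    have h1 : f i x ≠ 0 := fun h0 => by
      rw [mem_setOf_eq, h0, abs_zero] at hxi; exact absurd hxi (not_lt.mpr ht.le)
    have h2 : f j x ≠ 0 := fun h0 => by
      rw [mem_setOf_eq, h0, abs_zero] at hxj; exact absurd hxj (not_lt.mpr ht.le)
    rcases hd i j hij x with h | h
    · exact h1 h
    · exact h2 h
  rw [hset, measure_iUnion hdisj fun i => measurableSet_lt measurable_const (hm i).abs,
    tsum_fintype]


/-- For a finite Borel measure `μ` and `0 < p, q < ∞`: if `p ≤ q` then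
`L_{p,q}(μ)` satisfies an upper `p`-estimate and a lower `q`-estimate; if `p > q` it
satisfies an upper `q`-estimate and a lower `p`-estimate. -/
theorem lorentz_upper_lower_estimates
    {Ω : Type*} [TopologicalSpace Ω] [CompactSpace Ω] [T2Space Ω]
    [MeasurableSpace Ω] [BorelSpace Ω]
    (μ : Measure Ω) [IsFiniteMeasure μ]
    (p q : ℝ) (hp : 0 < p) (hq : 0 < q) :
    (p ≤ q →
      ∀ (n : ℕ) (f : Fin n → Ω → ℝ), (∀ i, Measurable (f i)) → DisjSupp f →
        LorentzNorm μ p q (fun x => ∑ i, f i x) ≤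
            (∑ i, LorentzNorm μ p q (f i) ^ p) ^ (1 / p) ∧
        (∑ i, LorentzNorm μ p q (f i) ^ q) ^ (1 / q) ≤
            LorentzNorm μ p q (fun x => ∑ i, f i x)) ∧
    (q < p →
      ∀ (n : ℕ) (f : Fin n → Ω → ℝ), (∀ i, Measurable (f i)) → DisjSupp f →
        LorentzNorm μ p q (fun x => ∑ i, f i x) ≤
            (∑ i, LorentzNorm μ p q (f i) ^ q) ^ (1 / q) ∧
        (∑ i, LorentzNorm μ p q (f i) ^ p) ^ (1 / p) ≤
            LorentzNorm μ p q (fun x => ∑ i, f i x)) := by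
  set s : ℝ := q / p with hs
  have hs0 : 0 < s := div_pos hq hp
  set φ : ℝ → ℝ≥0∞ := fun t => ENNReal.ofReal (q * t ^ (q - 1)) with hφ
  have hφm : Measurable φ := by rw [hφ]; fun_prop
  set ν : Measure ℝ := volume.restrict (Ioi (0:ℝ)) with hν
  -- common setup for a given family f
  have setup : ∀ (n : ℕ) (f : Fin n → Ω → ℝ), (∀ i, Measurable (f i)) → DisjSupp f →
      ∃ g : Fin n → ℝ → ℝ≥0∞, (∀ i, Measurable (g i)) ∧
        (∀ i, LorentzNorm μ p q (f i) = (∫⁻ t, φ t * g i t ^ s ∂ν) ^ (1/q)) ∧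
        (LorentzNorm μ p q (fun x => ∑ i, f i x)
          = (∫⁻ t, φ t * (∑ i, g i t) ^ s ∂ν) ^ (1/q)) := by
    intro n f hm hd
    refine ⟨fun i t => μ {x | t < |f i x|}, ?_, fun i => rfl, ?_⟩
    · intro i
      have : Antitone fun t => μ {x | t < |f i x|} := fun t t' h =>
        measure_mono fun x hx => lt_of_le_of_lt h hx
      exact this.measurable
    · unfold LorentzNorm
      congr 1
      refine setLIntegral_congr_fun measurableSet_Ioi (fun t ht => ?_)
      rw [aux_distrib μ f hm hd ht]
  constructor
  · -- p ≤ q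
    intro hpq n f hm hd
    have hs1 : 1 ≤ s := (one_le_div hp).mpr hpq
    obtain ⟨g, hg, hLi, hL⟩ := setup n f hm hd
    set G : Fin n → ℝ → ℝ≥0∞ := fun i t => φ t ^ (1/s) * g i t with hGdef
    have hGm : ∀ i, Measurable (G i) := fun i => (hφm.pow_const _).mul (hg i)
    have e1 : ∀ i t, G i t ^ s = φ t * g i t ^ s := by
      intro i t
      rw [hGdef, ENNReal.mul_rpow_of_nonneg _ _ hs0.le, ← ENNReal.rpow_mul,
        one_div, inv_mul_cancel₀ hs0.ne', ENNReal.rpow_one]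
    have e2 : ∀ t, (∑ i, G i t) ^ s = φ t * (∑ i, g i t) ^ s := by
      intro t
      rw [hGdef]
      rw [show ∑ i, φ t ^ (1/s) * g i t = φ t ^ (1/s) * ∑ i, g i t from
        (Finset.mul_sum _ _ _).symm]
      rw [ENNReal.mul_rpow_of_nonneg _ _ hs0.le, ← ENNReal.rpow_mul,
        one_div, inv_mul_cancel₀ hs0.ne', ENNReal.rpow_one]
    set J : Fin n → ℝ≥0∞ := fun i => ∫⁻ t, φ t * g i t ^ s ∂ν with hJ
    set Js : ℝ≥0∞ := ∫⁻ t, φ t * (∑ i, g i t) ^ s ∂ν with hJs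
    constructor
    · -- upper p-estimate
      have mink := aux_mink ν Finset.univ G hGm hs1
      simp only [e1, e2] at mink
      -- mink : Js ^ (1/s) ≤ ∑ i, (J i) ^ (1/s)
      have h2 : Js ^ (1/q) ≤ (∑ i, J i ^ (1/s)) ^ (1/p) := by
        calc Js ^ (1/q) = (Js ^ (1/s)) ^ (1/p) := by
              rw [← ENNReal.rpow_mul]
              congr 1
              rw [hs]; field_simp; try ring
            _ ≤ _ := ENNReal.rpow_le_rpow mink (by positivity)
      rw [hL]
      refine le_trans h2 (le_of_eq ?_)
      congr 1
      refine Finset.sum_congr rfl fun i _ => ?_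
      rw [hLi i, ← ENNReal.rpow_mul]
      congr 1
      rw [hs]; field_simp; try ring
    · -- lower q-estimate
      have hpt : ∀ t, ∑ i, φ t * g i t ^ s ≤ φ t * (∑ i, g i t) ^ s := by
        intro t
        rw [← Finset.mul_sum]
        exact mul_le_mul_right (aux_sum_rpow_le Finset.univ (fun i => g i t) hs1) _
      have hsum : ∑ i, J i ≤ Js := by
        rw [hJ, hJs, ← lintegral_finset_sum (f := fun i t => φ t * g i t ^ s) _
          (fun i _ => (hφm.mul ((hg i).pow_const s)))]
        exact lintegral_mono hpt
      have : (∑ i, LorentzNorm μ p q (f i) ^ q) = ∑ i, J i := by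
        refine Finset.sum_congr rfl fun i _ => ?_
        rw [hLi i, ← ENNReal.rpow_mul, one_div, inv_mul_cancel₀ hq.ne', ENNReal.rpow_one]
      rw [this, hL]
      exact ENNReal.rpow_le_rpow hsum (by positivity)
  · -- q < p
    intro hqp n f hm hd
    have hs1 : s < 1 := (div_lt_one hp).mpr hqp
    obtain ⟨g, hg, hLi, hL⟩ := setup n f hm hd
    set G : Fin n → ℝ → ℝ≥0∞ := fun i t => φ t ^ (1/s) * g i t with hGdef
    have hGm : ∀ i, Measurable (G i) := fun i => (hφm.pow_const _).mul (hg i)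
    have e1 : ∀ i t, G i t ^ s = φ t * g i t ^ s := by
      intro i t
      rw [hGdef, ENNReal.mul_rpow_of_nonneg _ _ hs0.le, ← ENNReal.rpow_mul,
        one_div, inv_mul_cancel₀ hs0.ne', ENNReal.rpow_one]
    have e2 : ∀ t, (∑ i, G i t) ^ s = φ t * (∑ i, g i t) ^ s := by
      intro t
      rw [hGdef]
      rw [show ∑ i, φ t ^ (1/s) * g i t = φ t ^ (1/s) * ∑ i, g i t from
        (Finset.mul_sum _ _ _).symm]
      rw [ENNReal.mul_rpow_of_nonneg _ _ hs0.le, ← ENNReal.rpow_mul,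
        one_div, inv_mul_cancel₀ hs0.ne', ENNReal.rpow_one]
    set J : Fin n → ℝ≥0∞ := fun i => ∫⁻ t, φ t * g i t ^ s ∂ν with hJ
    set Js : ℝ≥0∞ := ∫⁻ t, φ t * (∑ i, g i t) ^ s ∂ν with hJs
    constructor
    · -- upper q-estimate
      have hpt : ∀ t, φ t * (∑ i, g i t) ^ s ≤ ∑ i, φ t * g i t ^ s := by
        intro t
        rw [← Finset.mul_sum]
        exact mul_le_mul_right (aux_rpow_sum_le Finset.univ (fun i => g i t) hs0 hs1.le) _
      have hsum : Js ≤ ∑ i, J i := by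
        rw [hJ, hJs, ← lintegral_finset_sum (f := fun i t => φ t * g i t ^ s) _
          (fun i _ => (hφm.mul ((hg i).pow_const s)))]
        exact lintegral_mono hpt
      have he : (∑ i, LorentzNorm μ p q (f i) ^ q) = ∑ i, J i := by
        refine Finset.sum_congr rfl fun i _ => ?_
        rw [hLi i, ← ENNReal.rpow_mul, one_div, inv_mul_cancel₀ hq.ne', ENNReal.rpow_one]
      rw [he, hL]
      exact ENNReal.rpow_le_rpow hsum (by positivity)
    · -- lower p-estimate
      have mink := aux_rev_mink ν Finset.univ G hGm hs0 hs1.le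
      simp only [e1, e2] at mink
      -- mink : ∑ i, (J i) ^ (1/s) ≤ Js ^ (1/s)
      have h2 : (∑ i, J i ^ (1/s)) ^ (1/p) ≤ Js ^ (1/q) := by
        calc (∑ i, J i ^ (1/s)) ^ (1/p) ≤ (Js ^ (1/s)) ^ (1/p) :=
              ENNReal.rpow_le_rpow mink (by positivity)
          _ = Js ^ (1/q) := by
              rw [← ENNReal.rpow_mul]
              congr 1
              rw [hs]; field_simp; try ring
      rw [hL]
      refine le_trans (le_of_eq ?_) h2
      congr 1
      refine Finset.sum_congr rfl fun i _ => ?_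
      rw [hLi i, ← ENNReal.rpow_mul]
      congr 1
      rw [hs]; field_simp; try ring
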